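/- Let (q_k) be a strictly increasing sequence of positive integers with q_{k+1}/q_k → ∞, and fix M, H ∈ ℕ. For each k and each residue r_k ∈ [0, q_k), let Λ_k := {n ∈ ℕ : q_k ≤ n ≤ q_{k+1} − H − M, and n mod q_k ∉ {r_k − H − M + 1, ..., r_k} (mod q_k)}. Then Λ := ∪_k Λ_k has natural density 1: lim_{N→∞} (1/N)·#({1,...,N} ∩ Λ) = 1. -/

import Mathlib

open Filter

lemma count_bad (a b Q D : ℕ) (c : ℤ) (hQ : 0 < Q) :
    {n : ℕ | n ∈ Set.Icc a b ∧ ∃ i : ℕ, i < D ∧ (Q:ℤ) ∣ ((n:ℤ) - (c - i))}.ncard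
      ≤ D * ((b - a)/Q + 1) := by
  classical
  set P : ℕ → ℕ → Prop := fun n i => i < D ∧ (Q:ℤ) ∣ ((n:ℤ) - (c - i)) with hP
  set S : Set ℕ := {n : ℕ | n ∈ Set.Icc a b ∧ ∃ i : ℕ, P n i} with hS
  set f : ℕ → ℕ × ℕ := fun n =>
    if h : ∃ i : ℕ, P n i then (Nat.find h, (n - a)/Q) else (0, 0) with hf
  have hfval : ∀ n (h : ∃ i, P n i), f n = (Nat.find h, (n - a)/Q) := by
    intro n h; simp only [hf, dif_pos h]
  have key : ∀ x ∈ S, ∀ y ∈ S, f x = f y → x ≤ y → x = y := by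
    intro x hx y hy hxy hle
    obtain ⟨hxI, hxE⟩ := hx
    obtain ⟨hyI, hyE⟩ := hy
    rw [hfval x hxE, hfval y hyE, Prod.mk.injEq] at hxy
    obtain ⟨h1, h2⟩ := hxy
    have hdx := (Nat.find_spec hxE).2
    have hdy := (Nat.find_spec hyE).2
    rw [h1] at hdx
    have hdvd : (Q:ℤ) ∣ ((y:ℤ) - x) := by
      have := dvd_sub hdy hdx
      simpa using this
    have hdvd' : Q ∣ y - x := by
      have : ((y - x : ℕ) : ℤ) = (y:ℤ) - x := by omega
      exact Int.natCast_dvd_natCast.mp (this ▸ hdvd)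
    obtain ⟨t, ht⟩ := hdvd'
    have hax : a ≤ x := hxI.1
    have hya : y - a = (y - x) + (x - a) := by omega
    rw [hya, ht, Nat.mul_add_div hQ] at h2
    have ht0 : t = 0 := by omega
    subst ht0
    simp only [Nat.mul_zero] at ht
    omega
  have hmaps : ∀ n ∈ S, f n ∈ ((Finset.range D ×ˢ Finset.range ((b - a)/Q + 1) :
      Finset (ℕ × ℕ)) : Set (ℕ × ℕ)) := by
    intro n hn
    obtain ⟨hnI, hnE⟩ := hn
    rw [hfval n hnE]
    simp only [Finset.coe_product, Set.mem_prod, Finset.mem_coe, Finset.mem_range]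
    constructor
    · exact (Nat.find_spec hnE).1
    · exact Nat.lt_succ_of_le (Nat.div_le_div_right (Nat.sub_le_sub_right hnI.2 a))
  have hinj : Set.InjOn f S := by
    intro x hx y hy hxy
    rcases le_total x y with h | h
    · exact key x hx y hy hxy h
    · exact (key y hy x hx hxy.symm h).symm
  calc S.ncard ≤ _ := Set.ncard_le_ncard_of_injOn f hmaps hinj (Finset.finite_toSet _)
    _ = D * ((b - a)/Q + 1) := by
        rw [Set.ncard_coe_finset, Finset.card_product, Finset.card_range, Finset.card_range]

lemma ncard_Icc_nat (a b : ℕ) : (Set.Icc a b).ncard = b + 1 - a := by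
  rw [← Finset.coe_Icc, Set.ncard_coe_finset, Nat.card_Icc]

theorem stmt_13 (q : ℕ → ℕ) (hmono : StrictMono q) (hpos : ∀ k, 0 < q k)
    (hratio : Tendsto (fun k => (q (k + 1) : ℝ) / (q k : ℝ)) atTop atTop)
    (M H : ℕ) (r : ℕ → ℕ) (hr : ∀ k, r k < q k) :
    Tendsto
      (fun N : ℕ =>
        ((Set.Icc 1 N ∩ ⋃ k, {n : ℕ | q k ≤ n ∧ n ≤ q (k + 1) - H - M ∧
            ∀ i : ℕ, i < H + M → ¬ ((q k : ℤ) ∣ ((n : ℤ) - ((r k : ℤ) - i)))}).ncard : ℝ) / N)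
      atTop (nhds 1) := by
  classical
  have hq_ge : ∀ k, k ≤ q k := fun k => hmono.le_apply
  set Λ : Set ℕ := ⋃ k, {n : ℕ | q k ≤ n ∧ n ≤ q (k + 1) - H - M ∧
      ∀ i : ℕ, i < H + M → ¬ ((q k : ℤ) ∣ ((n : ℤ) - ((r k : ℤ) - i)))} with hΛ
  rw [Metric.tendsto_atTop]
  intro ε hε
  obtain ⟨R, hR⟩ := exists_nat_gt (2/ε)
  obtain ⟨A, hA⟩ := exists_nat_gt (2*(6*(H+M)+2)/ε)
  have hApos : (0:ℝ) < A := lt_of_le_of_lt (by positivity) hA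
  obtain ⟨K1, hK1⟩ := eventually_atTop.1 (hratio.eventually_ge_atTop (R:ℝ))
  set K0 := max K1 A with hK0
  refine ⟨max (q (K0+1)) 1, fun N hN => ?_⟩
  have hN1 : 1 ≤ N := le_trans (le_max_right _ _) hN
  have hNq : q (K0+1) ≤ N := le_trans (le_max_left _ _) hN
  obtain ⟨K, hK⟩ : ∃ K, K = Nat.findGreatest (fun k => q k ≤ N) N := ⟨_, rfl⟩
  have hKge : K0 + 1 ≤ K :=
    hK ▸ Nat.le_findGreatest (le_trans (hq_ge _) hNq) hNq
  have hqKN : q K ≤ N := Nat.findGreatest_of_ne_zero (P := fun k => q k ≤ N) (n := N) hK.symm (by omega)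
  have hNlt : N < q (K+1) := by
    by_contra h
    push_neg at h
    have : K + 1 ≤ Nat.findGreatest (fun k => q k ≤ N) N :=
      Nat.le_findGreatest (le_trans (hq_ge _) h) h
    rw [← hK] at this
    omega
  obtain ⟨J, hJK⟩ : ∃ J, K = J + 1 := ⟨K - 1, by omega⟩
  subst hJK
  have hNlt2 : N < q (J + 2) := hNlt
  have hJK1 : K1 ≤ J := by omega
  have hJA : A ≤ q J := le_trans (by omega) (hq_ge J)
  have hJA' : A ≤ q (J+1) := le_trans hJA (hmono (by omega)).le
  have hratJ : (R:ℝ) ≤ (q (J+1) : ℝ) / (q J : ℝ) := hK1 J hJK1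
  have hqJpos : (0:ℝ) < q J := by exact_mod_cast hpos J
  have hqJ1pos : (0:ℝ) < q (J+1) := by exact_mod_cast hpos (J+1)
  have hNpos : (0:ℝ) < N := by exact_mod_cast hN1
  have hfin : (Set.Icc 1 N).Finite := Set.finite_Icc _ _
  -- partition
  have hpart : (Set.Icc 1 N ∩ Λ).ncard + (Set.Icc 1 N \ Λ).ncard = N := by
    have hd : Disjoint (Set.Icc 1 N ∩ Λ) (Set.Icc 1 N \ Λ) :=
      (Set.disjoint_sdiff_inter (s := Set.Icc 1 N) (t := Λ)).symm
    have := Set.ncard_union_eq hd (hfin.inter_of_left _) hfin.diff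
    rw [Set.inter_union_diff, ncard_Icc_nat] at this
    omega
  -- complement decomposition
  set B1 : Set ℕ := {n : ℕ | n ∈ Set.Icc (q J) (q (J+1)) ∧
      ∃ i : ℕ, i < H + M ∧ (q J:ℤ) ∣ ((n:ℤ) - ((r J : ℤ) - i))} with hB1
  set B2 : Set ℕ := {n : ℕ | n ∈ Set.Icc (q (J+1)) N ∧
      ∃ i : ℕ, i < H + M ∧ (q (J+1):ℤ) ∣ ((n:ℤ) - ((r (J+1) : ℤ) - i))} with hB2
  have hCsub : Set.Icc 1 N \ Λ ⊆ Set.Icc 1 (q J) ∪ B1 ∪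
      Set.Icc (q (J+1) - (H+M)) (q (J+1)) ∪ B2 ∪ Set.Icc (q (J+2) - (H+M)) N := by
    intro n hn
    obtain ⟨hnI, hnΛ⟩ := hn
    rw [hΛ] at hnΛ
    simp only [Set.mem_iUnion, Set.mem_setOf_eq, not_exists] at hnΛ
    obtain ⟨hn1, hn2⟩ := hnI
    simp only [Set.mem_union, Set.mem_Icc, hB1, hB2, Set.mem_setOf_eq]
    by_cases h1 : n ≤ q J
    · exact Or.inl (Or.inl (Or.inl (Or.inl ⟨hn1, h1⟩)))
    push_neg at h1
    by_cases h2 : n < q (J+1)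
    · by_cases h3 : n ≤ q (J+1) - H - M
      · have h4 : ¬ (∀ i : ℕ, i < H + M → ¬ ((q J : ℤ) ∣ ((n : ℤ) - ((r J : ℤ) - i)))) :=
          fun hall => hnΛ J ⟨h1.le, h3, hall⟩
        push_neg at h4
        obtain ⟨i, hi, hd⟩ := h4
        exact Or.inl (Or.inl (Or.inl (Or.inr ⟨⟨h1.le, h2.le⟩, i, hi, hd⟩)))
      · exact Or.inl (Or.inl (Or.inr ⟨by omega, h2.le⟩))
    push_neg at h2
    by_cases h3 : n ≤ q (J+2) - H - M
    · have h4 : ¬ (∀ i : ℕ, i < H + M → ¬ ((q (J+1) : ℤ) ∣ ((n : ℤ) - ((r (J+1) : ℤ) - i)))) :=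
        fun hall => hnΛ (J+1) ⟨h2, h3, hall⟩
      push_neg at h4
      obtain ⟨i, hi, hd⟩ := h4
      exact Or.inl (Or.inr ⟨⟨h2, hn2⟩, i, hi, hd⟩)
    · exact Or.inr ⟨by omega, hn2⟩
  -- finiteness of the cover
  have hB1fin : B1.Finite := (Set.finite_Icc _ _).subset (fun n hn => hn.1)
  have hB2fin : B2.Finite := (Set.finite_Icc _ _).subset (fun n hn => hn.1)
  have hcovfin : (Set.Icc 1 (q J) ∪ B1 ∪ Set.Icc (q (J+1) - (H+M)) (q (J+1)) ∪ B2 ∪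
      Set.Icc (q (J+2) - (H+M)) N).Finite :=
    (((((Set.finite_Icc _ _).union hB1fin).union (Set.finite_Icc _ _)).union hB2fin).union
      (Set.finite_Icc _ _))
  -- nat cardinality bound
  have hCnat : (Set.Icc 1 N \ Λ).ncard ≤
      q J + (H+M) * ((q (J+1) - q J)/(q J) + 1) + ((H+M) + 1)
        + (H+M) * ((N - q (J+1))/(q (J+1)) + 1) + ((H+M)+1) := by
    refine le_trans (Set.ncard_le_ncard hCsub hcovfin) ?_
    refine le_trans (Set.ncard_union_le _ _) ?_
    refine add_le_add (le_trans (Set.ncard_union_le _ _) ?_) ?_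
    · refine add_le_add (le_trans (Set.ncard_union_le _ _) ?_) ?_
      · refine add_le_add (le_trans (Set.ncard_union_le _ _) ?_) ?_
        · refine add_le_add ?_ ?_
          · rw [ncard_Icc_nat]; omega
          · exact count_bad (q J) (q (J+1)) (q J) (H+M) (r J : ℤ) (hpos J)
        · rw [ncard_Icc_nat]; omega
      · exact count_bad (q (J+1)) N (q (J+1)) (H+M) (r (J+1) : ℤ) (hpos (J+1))
    · rw [ncard_Icc_nat]; omega
  -- pass to ℝ
  have hx1 : (((q (J+1) - q J)/(q J) : ℕ) : ℝ) ≤ (q (J+1) : ℝ) / (q J : ℝ) := by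
    refine le_trans (Nat.cast_div_le) ?_
    gcongr
    · exact_mod_cast Nat.sub_le _ _
  have hx2 : (((N - q (J+1))/(q (J+1)) : ℕ) : ℝ) ≤ (N : ℝ) / (q (J+1) : ℝ) := by
    refine le_trans (Nat.cast_div_le) ?_
    gcongr
    · exact_mod_cast Nat.sub_le _ _
  have hCR : ((Set.Icc 1 N \ Λ).ncard : ℝ) ≤
      (q J : ℝ) + (H+M) * ((q (J+1) : ℝ)/(q J : ℝ)) + (H+M) * ((N:ℝ)/(q (J+1):ℝ))
        + (4*(H+M)+2) := by
    have := hCnat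
    have hcast : ((Set.Icc 1 N \ Λ).ncard : ℝ) ≤
        (q J : ℝ) + (H+M) * ((((q (J+1) - q J)/(q J) : ℕ) : ℝ) + 1) + ((H+M) + 1)
          + (H+M) * ((((N - q (J+1))/(q (J+1)) : ℕ) : ℝ) + 1) + ((H+M)+1) := by
      exact_mod_cast this
    have hHM : (0:ℝ) ≤ (H+M:ℝ) := by positivity
    have m1 := mul_le_mul_of_nonneg_left hx1 hHM
    have m2 := mul_le_mul_of_nonneg_left hx2 hHM
    linarith
  -- real estimates
  have hq1N : (q (J+1) : ℝ) ≤ N := by exact_mod_cast hqKN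
  have hAle : (A:ℝ) ≤ q J := by exact_mod_cast hJA
  have hAle' : (A:ℝ) ≤ q (J+1) := by exact_mod_cast hJA'
  have hAN : (A:ℝ) ≤ N := le_trans hAle' hq1N
  have hRq : (R:ℝ) * (q J : ℝ) ≤ N := by
    have := (le_div_iff₀ hqJpos).mp hratJ
    linarith
  have h2εR : 2 < (R:ℝ) * ε := by
    have := (div_lt_iff₀ hε).mp hR
    linarith
  have hb1 : (q J : ℝ) < ε/2 * N := by
    linarith [mul_lt_mul_of_pos_right h2εR hqJpos, mul_le_mul_of_nonneg_left hRq hε.le]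
  have hb2 : (q (J+1) : ℝ)/(q J : ℝ) ≤ (N:ℝ)/(A:ℝ) := by gcongr
  have hb3 : (N:ℝ)/(q (J+1):ℝ) ≤ (N:ℝ)/(A:ℝ) := by gcongr
  have hb4 : (1:ℝ) ≤ (N:ℝ)/(A:ℝ) := (one_le_div hApos).mpr hAN
  have hb5 : (6*(H+M)+2:ℝ) * ((N:ℝ)/(A:ℝ)) ≤ ε/2 * N := by
    have hkey : (6*(H+M)+2:ℝ) ≤ ε/2 * A := by
      have := (div_lt_iff₀ hε).mp hA
      linarith
    have hNA : (N:ℝ) = (A:ℝ) * ((N:ℝ)/(A:ℝ)) := by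
      field_simp
    calc (6*(H+M)+2:ℝ) * ((N:ℝ)/(A:ℝ)) ≤ (ε/2 * A) * ((N:ℝ)/(A:ℝ)) := by
          exact mul_le_mul_of_nonneg_right hkey (by positivity)
      _ = ε/2 * N := by
          have hA0 : (A:ℝ) ≠ 0 := ne_of_gt hApos
          field_simp
  have hfinal : ((Set.Icc 1 N \ Λ).ncard : ℝ) < ε * N := by
    have hHM : (0:ℝ) ≤ (H+M:ℝ) := by positivity
    have c2 : (H+M:ℝ) * ((q (J+1) : ℝ)/(q J : ℝ)) ≤ (H+M:ℝ) * ((N:ℝ)/(A:ℝ)) :=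
      mul_le_mul_of_nonneg_left hb2 hHM
    have c3 : (H+M:ℝ) * ((N:ℝ)/(q (J+1):ℝ)) ≤ (H+M:ℝ) * ((N:ℝ)/(A:ℝ)) :=
      mul_le_mul_of_nonneg_left hb3 hHM
    have c4 : (4*(H+M)+2:ℝ) ≤ (4*(H+M)+2:ℝ) * ((N:ℝ)/(A:ℝ)) :=
      le_mul_of_one_le_right (by positivity) hb4
    linarith [hCR, hb1, hb5, c2, c3, c4]
  -- conclude
  have hcard : ((Set.Icc 1 N ∩ Λ).ncard : ℝ) = (N:ℝ) - ((Set.Icc 1 N \ Λ).ncard : ℝ) := by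
    have h2 : ((Set.Icc 1 N ∩ Λ).ncard : ℝ) + ((Set.Icc 1 N \ Λ).ncard : ℝ) = N := by
      exact_mod_cast hpart
    linarith
  simp only [Real.dist_eq]
  rw [hcard]
  have heq : ((N:ℝ) - ((Set.Icc 1 N \ Λ).ncard : ℝ))/N - 1
      = -(((Set.Icc 1 N \ Λ).ncard : ℝ)/N) := by
    field_simp
    ring
  rw [heq, abs_neg, abs_of_nonneg (by positivity)]
  rw [div_lt_iff₀ hNpos]
  linarith [hfinal]
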